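/- arXiv:1205.5044 — 2 statements merged into one kernel-verified Lean document; each statement's English description precedes it below -/
import Mathlib

section
/- Let W ⊂ ℝ^d be a convex compact body with inradius ϱ(W) > 0, and let x ∈ ℝ^d with ‖x‖ ≤ ϱ(W). Then 1 − |W ∩ (W − x)|/|W| ≤ d‖x‖/ϱ(W), where W − x is the translate of W by −x and |·| is Lebesgue measure. -/
open MeasureTheory Metric

/-- The inradius of a set `W`. -/
noncomputable def inradius {d : ℕ} (W : Set (EuclideanSpace ℝ (Fin d))) : ℝ :=
  sSup {r : ℝ | 0 < r ∧ ∃ x ∈ W, closedBall x r ⊆ W}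

/-- For a convex compact body `W` with positive inradius and `‖x‖ ≤ ϱ(W)`,
`1 − |W ∩ (W − x)|/|W| ≤ d‖x‖/ϱ(W)`. -/
theorem translate_overlap_inequality {d : ℕ} (hd : 1 ≤ d)
    (W : Set (EuclideanSpace ℝ (Fin d)))
    (hconv : Convex ℝ W) (hcomp : IsCompact W) (hϱ : 0 < inradius W)
    (x : EuclideanSpace ℝ (Fin d)) (hx : ‖x‖ ≤ inradius W) :
    1 - (volume (W ∩ ((fun w => w - x) '' W))).toReal / (volume W).toReal ≤
      (d : ℝ) * ‖x‖ / inradius W := by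
  set S : Set ℝ := {r : ℝ | 0 < r ∧ ∃ x ∈ W, closedBall x r ⊆ W} with hSdef
  have hSne : S.Nonempty := by
    by_contra h
    rw [Set.not_nonempty_iff_eq_empty] at h
    have : inradius W = 0 := by rw [inradius, ← hSdef, h, Real.sSup_empty]
    linarith
  -- W has positive finite volume
  obtain ⟨r₀, hr₀pos, z₀, hz₀, hball₀⟩ := id hSne
  have hW0 : volume W ≠ 0 := by
    have := measure_mono (μ := volume) hball₀
    have hpos : 0 < volume (closedBall z₀ r₀) := measure_closedBall_pos volume z₀ hr₀pos
    exact fun h => by simp [h] at this; exact absurd this (by simpa using hpos.ne')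
  have hWtop : volume W ≠ ⊤ := hcomp.measure_lt_top.ne
  have hWpos : 0 < (volume W).toReal :=
    ENNReal.toReal_pos hW0 hWtop
  set L : ℝ := 1 - (volume (W ∩ ((fun w => w - x) '' W))).toReal / (volume W).toReal with hL
  -- key estimate for any admissible radius
  have key : ∀ ρ ∈ S, L * ρ ≤ (d : ℝ) * ‖x‖ := by
    rintro ρ ⟨hρpos, z, hz, hball⟩
    have hratio_nonneg :
        0 ≤ (volume (W ∩ ((fun w => w - x) '' W))).toReal / (volume W).toReal :=
      div_nonneg ENNReal.toReal_nonneg ENNReal.toReal_nonneg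
    have hL1 : L ≤ 1 := by simp only [hL]; linarith
    rcases lt_or_ge ρ ‖x‖ with hcase | hcase
    · -- trivial case: ρ < ‖x‖
      have : L * ρ ≤ 1 * ρ := mul_le_mul_of_nonneg_right hL1 hρpos.le
      have hd' : (1 : ℝ) ≤ d := by exact_mod_cast hd
      nlinarith [norm_nonneg x]
    · -- main case: ‖x‖ ≤ ρ
      rcases eq_or_ne x 0 with rfl | hx0
      · -- x = 0
      -- the intersection is W itself
        have himg : (fun w => w - (0 : EuclideanSpace ℝ (Fin d))) '' W = W := by
          simp
        have : L = 0 := by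
          simp only [hL, himg, Set.inter_self]
          rw [div_self hWpos.ne']; ring
        simp [this]
      · have hxpos : 0 < ‖x‖ := norm_pos_iff.mpr hx0
        set t : ℝ := ‖x‖ / ρ with ht
        have ht0 : 0 < t := div_pos hxpos hρpos
        have ht1 : t ≤ 1 := (div_le_one hρpos).mpr hcase
        -- the shrunken body sits inside the intersection
        have himg : AffineMap.homothety z (1 - t) '' W ⊆
            W ∩ ((fun w => w - x) '' W) := by
          rintro _ ⟨w, hw, rfl⟩
          have hval : AffineMap.homothety z (1 - t) w = (1 - t) • w + t • z := by
            simp [AffineMap.homothety_apply, smul_sub]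
            module
          constructor
          · rw [hval]
            exact hconv hw hz (by linarith) ht0.le (by ring)
          · refine ⟨AffineMap.homothety z (1 - t) w + x, ?_, add_sub_cancel_right _ _⟩
            have hmem : z + t⁻¹ • x ∈ closedBall z ρ := by
              rw [mem_closedBall, dist_eq_norm]
              have : z + t⁻¹ • x - z = t⁻¹ • x := by abel
              rw [this, norm_smul, Real.norm_eq_abs, abs_of_nonneg (inv_nonneg.mpr ht0.le)]
              rw [ht]
              field_simp
              exact le_refl _
            have hu : z + t⁻¹ • x ∈ W := hball hmem
            have heq : AffineMap.homothety z (1 - t) w + x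
                = (1 - t) • w + t • (z + t⁻¹ • x) := by
              rw [hval, smul_add, smul_smul, mul_inv_cancel₀ ht0.ne', one_smul]
              abel
            rw [heq]
            exact hconv hw hu (by linarith) ht0.le (by ring)
        -- volume comparison
        have hvol : ENNReal.ofReal ((1 - t) ^ d) * volume W ≤
            volume (W ∩ ((fun w => w - x) '' W)) := by
          have := measure_mono (μ := volume) himg
          rwa [Measure.addHaar_image_homothety, finrank_euclideanSpace_fin,
            abs_of_nonneg (pow_nonneg (by linarith) _)] at this
        have hinter_top : volume (W ∩ ((fun w => w - x) '' W)) ≠ ⊤ :=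
          (lt_of_le_of_lt (measure_mono Set.inter_subset_left) hcomp.measure_lt_top).ne
        have hvolR : (1 - t) ^ d * (volume W).toReal ≤
            (volume (W ∩ ((fun w => w - x) '' W))).toReal := by
          have := ENNReal.toReal_mono hinter_top hvol
          rwa [ENNReal.toReal_mul, ENNReal.toReal_ofReal (pow_nonneg (by linarith) _)] at this
        have hratio : (1 - t) ^ d ≤
            (volume (W ∩ ((fun w => w - x) '' W))).toReal / (volume W).toReal :=
          (le_div_iff₀ hWpos).mpr hvolR
        have hbern : 1 - (1 - t) ^ d ≤ (d : ℝ) * t := by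
          have := one_add_mul_le_pow (a := -t) (by linarith) d
          have h' : 1 + (d : ℝ) * (-t) ≤ (1 + -t) ^ d := this
          have : (1 : ℝ) - (d : ℝ) * t ≤ (1 - t) ^ d := by
            have e : (1 : ℝ) + -t = 1 - t := by ring
            rw [← e]; linarith [h']
          linarith
        have hLle : L ≤ (d : ℝ) * t := by
          rw [hL]; linarith
        calc L * ρ ≤ ((d : ℝ) * t) * ρ := mul_le_mul_of_nonneg_right hLle hρpos.le
          _ = (d : ℝ) * ‖x‖ := by rw [ht]; field_simp
  -- conclude using the supremum
  rcases le_or_gt L 0 with hL0 | hL0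
  · exact le_trans hL0 (div_nonneg (mul_nonneg (by positivity) (norm_nonneg x)) hϱ.le)
  · have hub : ∀ ρ ∈ S, ρ ≤ (d : ℝ) * ‖x‖ / L := fun ρ hρ =>
      (le_div_iff₀ hL0).mpr (by rw [mul_comm]; exact key ρ hρ)
    have hsup : inradius W ≤ (d : ℝ) * ‖x‖ / L := csSup_le hSne hub
    have h2 : inradius W * L ≤ (d : ℝ) * ‖x‖ := (le_div_iff₀ hL0).mp hsup
    show L ≤ (d : ℝ) * ‖x‖ / inradius W
    rw [le_div_iff₀ hϱ, mul_comm]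
    exact h2
end

section
/- Let W ⊂ ℝ^d be a compact convex set. Every half-open unit cube E_z = [−1/2,1/2)^d + z (z ∈ ℤ^d) that intersects both W and its complement (equivalently, satisfies 0 < |E_z ∩ W| and E_z ⊄ W, i.e. E_z meets the boundary ∂W) is contained in the Minkowski sum ∂W ⊕ B(0, √d). Consequently, the number of such cubes is at most |∂W ⊕ B(0,√d)| ≤ 2(|W ⊕ B(0,√d)| − |W|). -/
open MeasureTheory Metric
open scoped ENNReal Pointwise

/-- The half-open unit cube `E_z = [−1/2, 1/2)^d + z` at a lattice point `z ∈ ℤ^d`. -/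
def unitCube {d : ℕ} (z : Fin d → ℤ) : Set (EuclideanSpace ℝ (Fin d)) :=
  {y | ∀ i, (z i : ℝ) - 1 / 2 ≤ y i ∧ y i < (z i : ℝ) + 1 / 2}

/-- A preconnected set meeting both a set and its complement meets the frontier. -/
lemma aux_inter_frontier {X : Type*} [TopologicalSpace X] {s t : Set X}
    (hs : IsPreconnected s) (h1 : (s ∩ t).Nonempty) (h2 : (s \ t).Nonempty) :
    (s ∩ frontier t).Nonempty := by
  by_contra h
  rw [Set.not_nonempty_iff_eq_empty] at h
  have hsub : s ⊆ interior t ∪ (closure t)ᶜ := by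
    intro x hx
    by_cases hxc : x ∈ closure t
    · left
      by_contra hxi
      exact Set.eq_empty_iff_forall_notMem.mp h x ⟨hx, hxc, hxi⟩
    · exact Or.inr hxc
  have hne1 : (s ∩ interior t).Nonempty := by
    obtain ⟨a, haS, haT⟩ := h1
    refine ⟨a, haS, ?_⟩
    by_contra hai
    exact Set.eq_empty_iff_forall_notMem.mp h a ⟨haS, subset_closure haT, hai⟩
  have hne2 : (s ∩ (closure t)ᶜ).Nonempty := by
    obtain ⟨b, hbS, hbT⟩ := h2
    refine ⟨b, hbS, ?_⟩
    intro hbc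
    exact Set.eq_empty_iff_forall_notMem.mp h b
      ⟨hbS, hbc, fun hbi => hbT (interior_subset hbi)⟩
  obtain ⟨c, _, hci, hcc⟩ := hs (interior t) (closure t)ᶜ isOpen_interior
    (isClosed_closure.isOpen_compl) hsub hne1 hne2
  exact hcc (interior_subset_closure hci)

lemma aux_convex_unitCube {d : ℕ} (z : Fin d → ℤ) : Convex ℝ (unitCube z) := by
  have : unitCube z = ⋂ i, ((fun y : EuclideanSpace ℝ (Fin d) => y i) ⁻¹'
      Set.Ico ((z i : ℝ) - 1 / 2) ((z i : ℝ) + 1 / 2)) := by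
    ext y
    simp [unitCube, Set.mem_Ico]
  rw [this]
  exact convex_iInter fun i => (convex_Ico _ _).is_linear_preimage
    ⟨fun a b => rfl, fun c a => rfl⟩

lemma aux_cube_eq {d : ℕ} (z : Fin d → ℤ) :
    unitCube z = ((MeasurableEquiv.toLp 2 (Fin d → ℝ)).symm) ⁻¹'
      (Set.univ.pi fun i => Set.Ico ((z i : ℝ) - 1 / 2) ((z i : ℝ) + 1 / 2)) := by
  ext y
  simp [unitCube, Set.mem_pi, Set.mem_Ico]

lemma aux_measurableSet_cube {d : ℕ} (z : Fin d → ℤ) : MeasurableSet (unitCube z) := by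
  rw [aux_cube_eq]
  exact ((MeasurableEquiv.toLp 2 (Fin d → ℝ)).symm).measurable
    (MeasurableSet.univ_pi fun i => measurableSet_Ico)

lemma aux_volume_cube {d : ℕ} (z : Fin d → ℤ) : volume (unitCube z) = 1 := by
  rw [aux_cube_eq]
  rw [(EuclideanSpace.volume_preserving_symm_measurableEquiv_toLp (Fin d)).measure_preimage
    (MeasurableSet.univ_pi fun i => measurableSet_Ico).nullMeasurableSet]
  rw [volume_pi_pi]
  have : ∀ i : Fin d, volume (Set.Ico ((z i : ℝ) - 1 / 2) ((z i : ℝ) + 1 / 2)) = 1 := by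
    intro i
    rw [Real.volume_Ico]
    norm_num
  rw [Finset.prod_congr rfl fun i _ => this i]
  simp

lemma aux_cube_disjoint {d : ℕ} {z1 z2 : Fin d → ℤ} (h : z1 ≠ z2) :
    Disjoint (unitCube z1) (unitCube z2) := by
  rw [Set.disjoint_left]
  intro y hy1 hy2
  apply h
  funext i
  have h1 := hy1 i
  have h2 := hy2 i
  have : (-1 : ℝ) < (z1 i : ℝ) - (z2 i : ℝ) ∧ ((z1 i : ℝ) - (z2 i : ℝ)) < 1 := by
    constructor <;> linarith [h1.1, h1.2, h2.1, h2.2]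
  have h3 : (-1 : ℝ) < ((z1 i - z2 i : ℤ) : ℝ) := by push_cast; linarith [this.1]
  have h4 : (((z1 i - z2 i : ℤ) : ℝ)) < 1 := by push_cast; linarith [this.2]
  have h5 : (-1 : ℤ) < z1 i - z2 i := by exact_mod_cast h3
  have h6 : z1 i - z2 i < 1 := by exact_mod_cast h4
  omega

lemma aux_cube_dist {d : ℕ} {z : Fin d → ℤ} {x y : EuclideanSpace ℝ (Fin d)}
    (hx : x ∈ unitCube z) (hy : y ∈ unitCube z) : ‖x - y‖ ≤ Real.sqrt d := by
  rw [EuclideanSpace.norm_eq]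
  apply Real.sqrt_le_sqrt
  have hb : ∀ i, ‖(x - y) i‖ ^ 2 ≤ 1 := by
    intro i
    have h1 := hx i
    have h2 := hy i
    have : (x - y) i = x i - y i := rfl
    rw [this, Real.norm_eq_abs, sq_abs]
    nlinarith [h1.1, h1.2, h2.1, h2.2]
  calc ∑ i, ‖(x - y) i‖ ^ 2 ≤ ∑ _i : Fin d, (1 : ℝ) := Finset.sum_le_sum fun i _ => hb i
    _ = d := by simp

/-- A 1-Lipschitz map does not increase volume in Euclidean space. -/
lemma aux_lipschitz_volume_image_le {d : ℕ}
    {f : EuclideanSpace ℝ (Fin d) → EuclideanSpace ℝ (Fin d)}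
    (hf : LipschitzWith 1 f) (s : Set (EuclideanSpace ℝ (Fin d))) :
    volume (f '' s) ≤ volume s := by
  let E := EuclideanSpace ℝ (Fin d)
  set n := Module.finrank ℝ (EuclideanSpace ℝ (Fin d)) with hn
  haveI : Measure.IsAddHaarMeasure (μH[(n:ℝ)] : Measure (EuclideanSpace ℝ (Fin d))) := isAddHaarMeasure_hausdorffMeasure
  have hvol : (volume : Measure (EuclideanSpace ℝ (Fin d))) =
      Measure.addHaarScalarFactor volume μH[n] • (μH[n] : Measure (EuclideanSpace ℝ (Fin d))) :=
    Measure.isAddLeftInvariant_eq_smul _ _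
  have key : (μH[n] : Measure (EuclideanSpace ℝ (Fin d))) (f '' s) ≤ μH[n] s := by
    have := hf.hausdorffMeasure_image_le (d := (n : ℝ)) (Nat.cast_nonneg n) s
    simpa using this
  rw [hvol]
  simp only [Measure.smul_apply, ENNReal.smul_def, smul_eq_mul]
  exact mul_le_mul_right key _

variable {F : Type*} [NormedAddCommGroup F] [InnerProductSpace ℝ F]

/-- Variational inequality for a nearest point in a convex set. -/
lemma aux_vi_of_min {W : Set F} (hW : Convex ℝ W) {y p : F} (hp : p ∈ W)
    (hmin : ∀ w ∈ W, dist y p ≤ dist y w) :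
    ∀ w ∈ W, (inner ℝ (y - p) (w - p) : ℝ) ≤ 0 := by
  intro w hw
  by_contra hI
  push_neg at hI
  set I : ℝ := inner ℝ (y - p) (w - p) with hIdef
  set c : ℝ := ‖w - p‖ ^ 2 with hcdef
  have hc : 0 < c := by
    rcases eq_or_ne w p with rfl | hne
    · simp [hIdef] at hI
    · have hwp : w - p ≠ 0 := sub_ne_zero.mpr hne
      rw [hcdef]
      exact pow_pos (norm_pos_iff.mpr hwp) 2
  set θ : ℝ := min 1 (I / c) with hθdef
  have hθ0 : 0 < θ := lt_min one_pos (div_pos hI hc)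
  have hθ1 : θ ≤ 1 := min_le_left _ _
  have hmem : p + θ • (w - p) ∈ W := by
    have := hW hp hw (by linarith : (0:ℝ) ≤ 1 - θ) hθ0.le (by ring)
    convert this using 1
    module
  have hd := hmin _ hmem
  rw [dist_eq_norm, dist_eq_norm] at hd
  have hsq : ‖y - p‖ ^ 2 ≤ ‖y - (p + θ • (w - p))‖ ^ 2 := by
    nlinarith [norm_nonneg (y - p), norm_nonneg (y - (p + θ • (w - p)))]
  have hexp : ‖y - (p + θ • (w - p))‖ ^ 2 = ‖y - p‖ ^ 2 - 2 * θ * I + θ ^ 2 * c := by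
    have h1 : y - (p + θ • (w - p)) = (y - p) - θ • (w - p) := by abel
    rw [h1, @norm_sub_sq_real, real_inner_smul_right, norm_smul]
    simp [hIdef, hcdef, mul_pow, abs_of_pos hθ0]
    ring
  rw [hexp] at hsq
  have hθc : θ * c ≤ I := by
    have h := min_le_right 1 (I / c)
    calc θ * c ≤ (I / c) * c := mul_le_mul_of_nonneg_right h hc.le
      _ = I := div_mul_cancel₀ I hc.ne'
  nlinarith [mul_pos hθ0 hI]

lemma aux_vi_unique {y p q : F}
    (h1 : (inner ℝ (y - p) (q - p) : ℝ) ≤ 0) (h2 : (inner ℝ (y - q) (p - q) : ℝ) ≤ 0) :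
    p = q := by
  have hsum : (inner ℝ (q - p) (q - p) : ℝ) ≤ 0 := by
    have e : (inner ℝ (y - p) (q - p) : ℝ) + (inner ℝ (y - q) (p - q) : ℝ)
        = (inner ℝ (q - p) (q - p) : ℝ) := by
      rw [show (p - q : F) = -(q - p) by abel, inner_neg_right, ← inner_neg_left,
        ← inner_add_left]
      congr 1
      abel
    rw [← e]
    exact add_nonpos h1 h2
  have := real_inner_self_nonpos.mp hsum
  exact (sub_eq_zero.mp this).symm

/-- Every half-open unit cube meeting the boundary of a compact convex set `W`
(i.e. with `0 < |E_z ∩ W|` and `E_z ⊄ W`) is contained in `∂W ⊕ B(0,√d)`, and the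
number of such cubes is at most `|∂W ⊕ B(0,√d)| ≤ 2(|W ⊕ B(0,√d)| − |W|)`. -/
theorem boundary_cubes_subset_dilated_frontier {d : ℕ} (hd : 1 ≤ d)
    (W : Set (EuclideanSpace ℝ (Fin d))) (hconv : Convex ℝ W) (hcomp : IsCompact W) :
    (∀ z : Fin d → ℤ, 0 < volume (unitCube z ∩ W) → ¬ unitCube z ⊆ W →
      unitCube z ⊆ frontier W + closedBall (0 : EuclideanSpace ℝ (Fin d)) (Real.sqrt d)) ∧
    ({z : Fin d → ℤ | 0 < volume (unitCube z ∩ W) ∧ ¬ unitCube z ⊆ W}.ncard : ℝ≥0∞) ≤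
      volume (frontier W + closedBall (0 : EuclideanSpace ℝ (Fin d)) (Real.sqrt d)) ∧
    volume (frontier W + closedBall (0 : EuclideanSpace ℝ (Fin d)) (Real.sqrt d)) ≤
      2 * (volume (W + closedBall (0 : EuclideanSpace ℝ (Fin d)) (Real.sqrt d)) - volume W) := by
  have part1 : ∀ z : Fin d → ℤ, 0 < volume (unitCube z ∩ W) → ¬ unitCube z ⊆ W →
      unitCube z ⊆ frontier W + closedBall (0 : EuclideanSpace ℝ (Fin d)) (Real.sqrt d) := by
    intro z hvol hnot x hx
    obtain ⟨p, hp⟩ : (unitCube z ∩ W).Nonempty := nonempty_of_measure_ne_zero hvol.ne'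
    obtain ⟨q, hqc, hqW⟩ : ∃ q, q ∈ unitCube z ∧ q ∉ W := Set.not_subset.mp hnot
    have hseg : segment ℝ p q ⊆ unitCube z :=
      (aux_convex_unitCube z).segment_subset hp.1 hqc
    obtain ⟨f, hfseg, hffr⟩ := aux_inter_frontier (convex_segment p q).isPreconnected
      ⟨p, left_mem_segment ℝ p q, hp.2⟩ ⟨q, right_mem_segment ℝ p q, hqW⟩
    refine Set.mem_add.mpr ⟨f, hffr, x - f, ?_, by abel⟩
    rw [mem_closedBall_zero_iff]
    exact aux_cube_dist hx (hseg hfseg)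
  refine ⟨part1, ?_, ?_⟩
  · -- counting part
    set S := {z : Fin d → ℤ | 0 < volume (unitCube z ∩ W) ∧ ¬ unitCube z ⊆ W} with hS
    by_cases hfin : S.Finite
    · have hsub : ∀ z ∈ hfin.toFinset, unitCube z ⊆
          frontier W + closedBall (0 : EuclideanSpace ℝ (Fin d)) (Real.sqrt d) := by
        intro z hz
        rw [Set.Finite.mem_toFinset] at hz
        exact part1 z hz.1 hz.2
      have hdisj : (↑hfin.toFinset : Set (Fin d → ℤ)).PairwiseDisjoint unitCube :=
        fun z1 _ z2 _ hne => aux_cube_disjoint hne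
      calc (S.ncard : ℝ≥0∞) = (hfin.toFinset.card : ℝ≥0∞) := by
            rw [Set.ncard_eq_toFinset_card _ hfin]
        _ = ∑ z ∈ hfin.toFinset, volume (unitCube z) := by
            simp [aux_volume_cube]
        _ = volume (⋃ z ∈ hfin.toFinset, unitCube z) :=
            (measure_biUnion_finset hdisj fun z _ => aux_measurableSet_cube z).symm
        _ ≤ volume (frontier W + closedBall (0 : EuclideanSpace ℝ (Fin d)) (Real.sqrt d)) :=
            measure_mono (Set.iUnion₂_subset hsub)
    · rw [Set.Infinite.ncard hfin]
      simp
  · -- measure bound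
    rcases W.eq_empty_or_nonempty with rfl | hWne
    · simp
    have hr0 : (0:ℝ) ≤ Real.sqrt d := Real.sqrt_nonneg d
    set B := closedBall (0 : EuclideanSpace ℝ (Fin d)) (Real.sqrt d) with hBdef
    set Fr := frontier W with hFrdef
    have hFrW : Fr ⊆ W := hcomp.isClosed.frontier_subset
    have hWB : W ⊆ W + B := fun w hw =>
      Set.mem_add.mpr ⟨w, hw, 0, by simp [hBdef, hr0], add_zero w⟩
    -- nearest point projection onto W
    have hproj : ∀ y : EuclideanSpace ℝ (Fin d), ∃ p ∈ W, infDist y W = dist y p :=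
      fun y => hcomp.exists_infDist_eq_dist hWne y
    choose P hPmem hPdist using hproj
    have hmin : ∀ y : EuclideanSpace ℝ (Fin d), ∀ w ∈ W, dist y (P y) ≤ dist y w :=
      fun y w hw => (hPdist y) ▸ infDist_le_dist_of_mem hw
    have hVI : ∀ y : EuclideanSpace ℝ (Fin d), ∀ w ∈ W,
        (inner ℝ (y - P y) (w - P y) : ℝ) ≤ 0 :=
      fun y => aux_vi_of_min hconv (hPmem y) (hmin y)
    set g : EuclideanSpace ℝ (Fin d) → EuclideanSpace ℝ (Fin d) :=
      fun y => (2:ℝ) • P y - y with hgdef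
    have hg : LipschitzWith 1 g := by
      apply LipschitzWith.of_dist_le_mul
      intro y1 y2
      rw [NNReal.coe_one, one_mul, dist_eq_norm, dist_eq_norm]
      have hab : 0 ≤ (inner ℝ ((y1 - y2) - (P y1 - P y2)) (P y1 - P y2) : ℝ) := by
        have h1 := hVI y1 (P y2) (hPmem y2)
        have h2 := hVI y2 (P y1) (hPmem y1)
        have e : ((y1 - y2) - (P y1 - P y2) : EuclideanSpace ℝ (Fin d))
            = (y1 - P y1) - (y2 - P y2) := by abel
        rw [e, inner_sub_left]
        have e1 : (inner ℝ (y1 - P y1) (P y1 - P y2) : ℝ)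
            = -(inner ℝ (y1 - P y1) (P y2 - P y1) : ℝ) := by
          rw [show (P y1 - P y2 : EuclideanSpace ℝ (Fin d)) = -(P y2 - P y1) by abel,
            inner_neg_right]
        rw [e1]
        linarith
      have e2 : g y1 - g y2 = (2:ℝ) • (P y1 - P y2) - (y1 - y2) := by
        simp only [hgdef]
        module
      have hsq : ‖g y1 - g y2‖ ^ 2 ≤ ‖y1 - y2‖ ^ 2 := by
        rw [e2, norm_sub_sq_real, real_inner_smul_left, norm_smul]
        rw [inner_sub_left, real_inner_self_eq_norm_sq] at hab
        have hcomm : (inner ℝ (P y1 - P y2) (y1 - y2) : ℝ)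
            = (inner ℝ (y1 - y2) (P y1 - P y2) : ℝ) := real_inner_comm _ _
        simp only [Real.norm_ofNat]
        nlinarith [norm_nonneg (P y1 - P y2)]
      nlinarith [norm_nonneg (g y1 - g y2), norm_nonneg (y1 - y2)]
    -- the key inclusion
    have hkey : ((Fr + B) ∩ W) \ Fr ⊆ g '' ((W + B) \ W) := by
      rintro x ⟨⟨hxS, hxW⟩, hxF⟩
      obtain ⟨f, hfF, b0, hb0, hfb⟩ := Set.mem_add.mp hxS
      have hxint : x ∈ interior W := by
        by_contra h
        exact hxF ⟨subset_closure hxW, h⟩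
      have hFrc : IsCompact Fr := hcomp.of_isClosed_subset isClosed_frontier hFrW
      obtain ⟨p, hpF, hpd⟩ := hFrc.exists_infDist_eq_dist ⟨f, hfF⟩ x
      set t := infDist x Fr with htdef
      have ht_pos : 0 < t := by
        rw [hpd]
        exact dist_pos.mpr (fun h => hxF (h ▸ hpF))
      have ht_le : t ≤ Real.sqrt d := by
        have h1 : dist x f = ‖b0‖ := by
          rw [dist_eq_norm, ← hfb]
          congr 1
          abel
        have h2 : ‖b0‖ ≤ Real.sqrt d := mem_closedBall_zero_iff.mp hb0
        calc t ≤ dist x f := infDist_le_dist_of_mem hfF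
          _ ≤ Real.sqrt d := h1 ▸ h2
      have hball : ball x t ⊆ interior W := by
        apply interior_maximal _ isOpen_ball
        intro u hu
        by_contra huW
        obtain ⟨f', hf'seg, hf'F⟩ := aux_inter_frontier
          (convex_segment x u).isPreconnected
          ⟨x, left_mem_segment ℝ x u, hxW⟩ ⟨u, right_mem_segment ℝ x u, huW⟩
        have hf'ball : f' ∈ ball x t :=
          (convex_ball x t).segment_subset (mem_ball_self ht_pos) hu hf'seg
        have hlt : dist x f' < t := by
          rw [dist_comm]
          exact mem_ball.mp hf'ball
        exact absurd (infDist_le_dist_of_mem hf'F) (not_le.mpr hlt)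
      -- separating functional
      have hpnint : p ∉ interior W := fun h => hpF.2 h
      obtain ⟨φ, hφ⟩ := geometric_hahn_banach_open_point hconv.interior isOpen_interior hpnint
      set u0 := (InnerProductSpace.toDual ℝ (EuclideanSpace ℝ (Fin d))).symm φ with hu0def
      have hu0 : ∀ w, (inner ℝ u0 w : ℝ) = φ w := fun w => InnerProductSpace.toDual_symm_apply
      have hu0ne : u0 ≠ 0 := by
        intro h
        have h2 := hφ x hxint
        rw [← hu0, ← hu0, h] at h2
        simp at h2
      set v := ‖u0‖⁻¹ • u0 with hvdef
      have hv1 : ‖v‖ = 1 := norm_smul_inv_norm hu0ne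
      have hvv : (inner ℝ v v : ℝ) = 1 := by
        rw [real_inner_self_eq_norm_sq, hv1]
        norm_num
      have hvint : ∀ w ∈ interior W, (inner ℝ v w : ℝ) < (inner ℝ v p : ℝ) := by
        intro w hw
        have h1 := hφ w hw
        rw [hvdef]
        rw [real_inner_smul_left, real_inner_smul_left, hu0 w, hu0 p]
        have hpos : (0:ℝ) < ‖u0‖⁻¹ := inv_pos.mpr (norm_pos_iff.mpr hu0ne)
        exact mul_lt_mul_of_pos_left h1 hpos
      have hvW : ∀ w ∈ W, (inner ℝ v w : ℝ) ≤ (inner ℝ v p : ℝ) := by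
        intro w hw
        have hcl : w ∈ closure (interior W) := by
          have htend : Filter.Tendsto (fun n : ℕ => w + ((1:ℝ)/(n+1)) • (x - w))
              Filter.atTop (nhds w) := by
            have h0 : Filter.Tendsto (fun n : ℕ => ((1:ℝ)/(n+1))) Filter.atTop (nhds 0) :=
              tendsto_one_div_add_atTop_nhds_zero_nat
            have h1 := (h0.smul_const (x - w)).const_add w
            simpa using h1
          refine mem_closure_of_tendsto htend (Filter.Eventually.of_forall fun n => ?_)
          refine hconv.add_smul_sub_mem_interior hw hxint ⟨by positivity, ?_⟩
          rw [div_le_one (by positivity)]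
          have : (0:ℝ) ≤ (n:ℝ) := Nat.cast_nonneg n
          linarith
        exact closure_minimal (t := {a | (inner ℝ v a : ℝ) ≤ inner ℝ v p}) (fun a ha => (hvint a ha).le)
          (isClosed_le (continuous_const.inner continuous_id) continuous_const) hcl
      -- inner products with v
      have hxv : ∀ s : ℝ, 0 ≤ s → s < t → (inner ℝ v x : ℝ) + s < (inner ℝ v p : ℝ) := by
        intro s hs0 hst
        have hmem : x + s • v ∈ ball x t := by
          rw [mem_ball, dist_eq_norm]
          have : x + s • v - x = s • v := by abel
          rw [this, norm_smul, hv1, mul_one, Real.norm_eq_abs, abs_of_nonneg hs0]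
          exact hst
        have h1 := hvint _ (hball hmem)
        rw [inner_add_right, real_inner_smul_right, hvv, mul_one] at h1
        exact h1
      have hc0 : (0:ℝ) < (inner ℝ v p : ℝ) - (inner ℝ v x : ℝ) := by
        have := hxv 0 le_rfl ht_pos
        linarith
      have hct : t ≤ (inner ℝ v (p - x) : ℝ) := by
        rw [inner_sub_right]
        by_contra hlt
        push_neg at hlt
        have := hxv ((inner ℝ v p : ℝ) - (inner ℝ v x : ℝ)) hc0.le (by linarith)
        linarith
      have hnorm_px : ‖p - x‖ = t := by
        rw [hpd, dist_comm, dist_eq_norm]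
      have hle : (inner ℝ v (p - x) : ℝ) ≤ t := by
        calc (inner ℝ v (p - x) : ℝ) ≤ ‖v‖ * ‖p - x‖ := real_inner_le_norm v (p - x)
          _ = t := by rw [hv1, one_mul, hnorm_px]
      have hcv : (inner ℝ v (p - x) : ℝ) = t := le_antisymm hle hct
      have hpx : p - x = t • v := by
        have hz : ‖p - x - t • v‖ ^ 2 = 0 := by
          rw [norm_sub_sq_real, real_inner_smul_right, norm_smul, real_inner_comm, hcv,
            hnorm_px, Real.norm_eq_abs, abs_of_nonneg ht_pos.le, hv1]
          ring
        have h0 : p - x - t • v = 0 := by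
          have h1 := pow_eq_zero_iff (n := 2) (by norm_num : (2:ℕ) ≠ 0) |>.mp hz
          rwa [norm_eq_zero] at h1
        exact sub_eq_zero.mp h0
      have hp_eq : p = x + t • v := by rw [← hpx]; abel
      set y := x + (2*t) • v with hydef
      have hyp : y = p + t • v := by rw [hydef, hp_eq]; module
      have hyWB : y ∈ W + B := by
        refine Set.mem_add.mpr ⟨p, hFrW hpF, t • v, ?_, hyp.symm⟩
        rw [hBdef, mem_closedBall_zero_iff, norm_smul, hv1, mul_one, Real.norm_eq_abs,
          abs_of_nonneg ht_pos.le]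
        exact ht_le
      have hvy : (inner ℝ v y : ℝ) = (inner ℝ v p : ℝ) + t := by
        rw [hyp, inner_add_right, real_inner_smul_right, hvv, mul_one]
      have hyW : y ∉ W := by
        intro hyW
        have := hvW y hyW
        rw [hvy] at this
        linarith
      have hdyp : dist y p = t := by
        rw [hyp, dist_eq_norm]
        have he : p + t • v - p = t • v := by abel
        rw [he, norm_smul, hv1, mul_one, Real.norm_eq_abs, abs_of_nonneg ht_pos.le]
      have hyp_min : ∀ w ∈ W, dist y p ≤ dist y w := by
        intro w hw
        have h2 : (inner ℝ v (y - w) : ℝ) ≤ dist y w := by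
          calc (inner ℝ v (y - w) : ℝ) ≤ ‖v‖ * ‖y - w‖ := real_inner_le_norm _ _
            _ = dist y w := by rw [hv1, one_mul, dist_eq_norm]
        have h3 : t ≤ (inner ℝ v (y - w) : ℝ) := by
          rw [inner_sub_right, hvy]
          have := hvW w hw
          linarith
        rw [hdyp]
        linarith
      have hPy : P y = p :=
        aux_vi_unique (hVI y p (hFrW hpF))
          (aux_vi_of_min hconv (hFrW hpF) hyp_min (P y) (hPmem y))
      refine ⟨y, ⟨hyWB, hyW⟩, ?_⟩
      show (2:ℝ) • P y - y = x
      rw [hPy, hp_eq, hydef]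
      module
    -- putting the measure estimates together
    have hvol_g := aux_lipschitz_volume_image_le hg ((W + B) \ W)
    have hFr0 : volume Fr = 0 := hconv.addHaar_frontier volume
    have hD : volume ((W + B) \ W) = volume (W + B) - volume W :=
      measure_diff hWB hcomp.isClosed.measurableSet.nullMeasurableSet hcomp.measure_lt_top.ne
    have hsub1 : (Fr + B) \ W ⊆ (W + B) \ W :=
      Set.diff_subset_diff_left (Set.add_subset_add_right hFrW)
    calc volume (Fr + B)
        ≤ volume ((Fr + B) \ W) + volume ((Fr + B) ∩ W) := by
          conv_lhs => rw [← Set.diff_union_inter (Fr + B) W]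
          exact measure_union_le _ _
      _ ≤ volume ((W + B) \ W) + (volume (((Fr + B) ∩ W) \ Fr) + volume Fr) := by
          refine add_le_add (measure_mono hsub1) ?_
          calc volume ((Fr + B) ∩ W) ≤ volume (((( Fr + B) ∩ W) \ Fr) ∪ Fr) :=
                measure_mono (by
                  intro a ha
                  by_cases h : a ∈ Fr
                  exacts [Or.inr h, Or.inl ⟨ha, h⟩])
            _ ≤ _ := measure_union_le _ _
      _ ≤ volume ((W + B) \ W) + (volume ((W + B) \ W) + 0) := by
          refine add_le_add le_rfl (add_le_add ?_ hFr0.le)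
          calc volume (((Fr + B) ∩ W) \ Fr) ≤ volume (g '' ((W + B) \ W)) :=
                measure_mono hkey
            _ ≤ volume ((W + B) \ W) := hvol_g
      _ = 2 * volume ((W + B) \ W) := by rw [add_zero, two_mul]
      _ = 2 * (volume (W + B) - volume W) := by rw [hD]
end
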